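/- Let α > 0, β > 0, and let s > 0 be a real number. Then ∫₀^∞ e^{−st} · (∑_{k=0}^∞ (− ψ(αk+β) / (k! · Γ(αk+β))) · t^k) dt = − (1/s) · ∑_{k=0}^∞ s^{−k} · ψ(αk+β) / Γ(αk+β). (The integrand series is the term-by-term derivative with respect to β of the Wright function W_{α,β}(t).) -/

import Mathlib

set_option maxHeartbeats 800000

open Real MeasureTheory

/-- The digamma function `ψ(x) = the logarithmic derivative of Γ`, i.e. the derivative of `log ∘ Γ`. -/
noncomputable def digamma (x : ℝ) : ℝ := deriv (fun y : ℝ => Real.log (Real.Gamma y)) x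

lemma diffAt_logGamma {x : ℝ} (hx : 0 < x) :
    DifferentiableAt ℝ (Real.log ∘ Real.Gamma) x := by
  refine (Real.differentiableAt_Gamma ?_).log (Real.Gamma_ne_zero ?_) <;>
    · intro m
      have : (0:ℝ) ≤ (m:ℝ) := Nat.cast_nonneg m
      intro h
      rw [h] at hx
      linarith

lemma digamma_le_log {x : ℝ} (hx : 0 < x) : digamma x ≤ Real.log x := by
  have h := Real.convexOn_log_Gamma.deriv_le_slope (Set.mem_Ioi.2 hx)
    (Set.mem_Ioi.2 (by linarith : (0:ℝ) < x + 1)) (by linarith) (diffAt_logGamma hx)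
  rw [slope_def_field] at h
  have h' : digamma x ≤ (Real.log (Real.Gamma (x+1)) - Real.log (Real.Gamma x)) / (x+1-x) := h
  rw [Real.Gamma_add_one hx.ne', Real.log_mul hx.ne' (Real.Gamma_pos_of_pos hx).ne'] at h'
  calc digamma x ≤ _ := h'
    _ = Real.log x := by field_simp; ring

lemma log_le_digamma {x : ℝ} (hx : 1 < x) : Real.log (x - 1) ≤ digamma x := by
  have hx1 : (0:ℝ) < x - 1 := by linarith
  have h := Real.convexOn_log_Gamma.slope_le_deriv (Set.mem_Ioi.2 hx1)
    (Set.mem_Ioi.2 (by linarith : (0:ℝ) < x)) (by linarith) (diffAt_logGamma (by linarith))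
  rw [slope_def_field] at h
  have h' : (Real.log (Real.Gamma x) - Real.log (Real.Gamma (x-1))) / (x-(x-1))
      ≤ digamma x := h
  have hG : Real.log (Real.Gamma x)
      = Real.log (x-1) + Real.log (Real.Gamma (x-1)) := by
    have : Real.Gamma x = (x-1) * Real.Gamma (x-1) := by
      have := Real.Gamma_add_one hx1.ne'
      simpa using this
    rw [this, Real.log_mul hx1.ne' (Real.Gamma_pos_of_pos hx1).ne']
  calc Real.log (x-1) = (Real.log (Real.Gamma x) - Real.log (Real.Gamma (x-1))) / (x-(x-1)) := by
        rw [hG]; field_simp; ring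
    _ ≤ _ := h'

lemma Gamma_mul_rpow_le {α x : ℝ} (hα : 0 < α) (hx : 1 < x) :
    Real.Gamma x * (x - 1) ^ α ≤ Real.Gamma (x + α) := by
  have hx1 : (0:ℝ) < x - 1 := by linarith
  have h := Real.convexOn_log_Gamma.slope_mono_adjacent (Set.mem_Ioi.2 hx1)
    (Set.mem_Ioi.2 (by linarith : (0:ℝ) < x + α)) (by linarith) (by linarith)
  have h : (Real.log (Real.Gamma x) - Real.log (Real.Gamma (x-1))) / (x-(x-1))
      ≤ (Real.log (Real.Gamma (x+α)) - Real.log (Real.Gamma x)) / (x+α-x) := h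
  have hG : Real.log (Real.Gamma x)
      = Real.log (x-1) + Real.log (Real.Gamma (x-1)) := by
    have : Real.Gamma x = (x-1) * Real.Gamma (x-1) := by
      have := Real.Gamma_add_one hx1.ne'
      simpa using this
    rw [this, Real.log_mul hx1.ne' (Real.Gamma_pos_of_pos hx1).ne']
  have key : Real.log (x-1) * α
      ≤ Real.log (Real.Gamma (x+α)) - Real.log (Real.Gamma x) := by
    have h1 : Real.log (x-1)
        ≤ (Real.log (Real.Gamma (x+α)) - Real.log (Real.Gamma x)) / α := by
      calc Real.log (x-1) = (Real.log (Real.Gamma x) - Real.log (Real.Gamma (x-1)))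
            / (x - (x-1)) := by rw [hG]; field_simp; ring
        _ ≤ _ := by convert h using 2 <;> ring
    have := mul_le_mul_of_nonneg_right h1 hα.le
    rwa [div_mul_cancel₀ _ hα.ne'] at this
  have e1 : (x - 1) ^ α = Real.exp (Real.log (x-1) * α) :=
    Real.rpow_def_of_pos hx1 α
  have e2 : Real.Gamma x = Real.exp (Real.log (Real.Gamma x)) :=
    (Real.exp_log (Real.Gamma_pos_of_pos (by linarith))).symm
  have e3 : Real.Gamma (x+α) = Real.exp (Real.log (Real.Gamma (x+α))) :=
    (Real.exp_log (Real.Gamma_pos_of_pos (by linarith))).symm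
  rw [e1]
  calc Real.Gamma x * Real.exp (Real.log (x-1) * α)
      = Real.exp (Real.log (Real.Gamma x) + Real.log (x-1) * α) := by
        rw [Real.exp_add, ← e2]
    _ ≤ Real.exp (Real.log (Real.Gamma (x+α))) := by
        apply Real.exp_le_exp.2; linarith
    _ = Real.Gamma (x+α) := by rw [← e3]

section main

variable {α β s : ℝ}

/-- summability of the comparison series -/
lemma summable_b (hα : 0 < α) (hβ : 0 < β) (hs : 0 < s) :
    Summable (fun k : ℕ => (1/s)^k * ((α*k+β) / Real.Gamma (α*k+β))) := by
  set b : ℕ → ℝ := fun k => (1/s)^k * ((α*k+β) / Real.Gamma (α*k+β)) with hb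
  have hxpos : ∀ k : ℕ, 0 < α*k+β := fun k => by positivity
  apply summable_of_ratio_norm_eventually_le (r := 1/2) (by norm_num)
  -- eventually conditions
  have ht : Filter.Tendsto (fun k : ℕ => (α*k+β-1) ^ α) Filter.atTop Filter.atTop := by
    apply (tendsto_rpow_atTop hα).comp
    apply Filter.tendsto_atTop_add_const_right
    exact (Filter.tendsto_atTop_add_const_right _ β
      ((tendsto_natCast_atTop_atTop (R := ℝ)).const_mul_atTop hα))
  have h1 : ∀ᶠ k : ℕ in Filter.atTop, 2/s * (1+α/β) ≤ (α*k+β-1) ^ α :=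
    ht.eventually_ge_atTop _
  have ht2 : Filter.Tendsto (fun k : ℕ => α*k+β) Filter.atTop Filter.atTop :=
    Filter.tendsto_atTop_add_const_right _ β
      ((tendsto_natCast_atTop_atTop (R := ℝ)).const_mul_atTop hα)
  have h2 : ∀ᶠ k : ℕ in Filter.atTop, (2:ℝ) ≤ α*k+β := ht2.eventually_ge_atTop _
  filter_upwards [h1, h2] with k hP hx2
  set x := α*k+β with hxdef
  have hx1 : (1:ℝ) < x := by linarith
  have hGx : 0 < Real.Gamma x := Real.Gamma_pos_of_pos (hxpos k)
  have hGx' : 0 < Real.Gamma (x+α) := Real.Gamma_pos_of_pos (by linarith)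
  have hPpos : (0:ℝ) < (x-1)^α := Real.rpow_pos_of_pos (by linarith) _
  have hGam : Real.Gamma x * (x-1)^α ≤ Real.Gamma (x+α) := Gamma_mul_rpow_le hα hx1
  have hβx : β ≤ x := by
    have : (0:ℝ) ≤ α * k := by positivity
    linarith
  have step : (1/s) * ((x+α)/Real.Gamma (x+α)) ≤ 1/2 * (x/Real.Gamma x) := by
    have hle : (x+α)/Real.Gamma (x+α) ≤ (x+α)/(Real.Gamma x * (x-1)^α) :=
      div_le_div_of_nonneg_left (by linarith) (by positivity) hGam
    have key : 2*(x+α) ≤ s * (x-1)^α * x := by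
      have h3 := mul_le_mul_of_nonneg_left hP (by positivity : (0:ℝ) ≤ s*x)
      have h4 : s*x*(2/s*(1+α/β)) = 2*x + 2*x*(α/β) := by field_simp
      have h5 : α ≤ x*(α/β) := by
        rw [mul_div_assoc']
        rw [le_div_iff₀ hβ]
        nlinarith
      nlinarith
    calc (1/s) * ((x+α)/Real.Gamma (x+α))
        ≤ (1/s) * ((x+α)/(Real.Gamma x * (x-1)^α)) := by
          apply mul_le_mul_of_nonneg_left hle (by positivity)
      _ = (x+α) / (s * (Real.Gamma x * (x-1)^α)) := by ring
      _ ≤ x / (2 * Real.Gamma x) := by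
          rw [div_le_div_iff₀ (by positivity) (by positivity)]
          nlinarith [mul_le_mul_of_nonneg_right key hGx.le]
      _ = 1/2 * (x/Real.Gamma x) := by ring
  have hxk1 : α*(k+1:ℕ)+β = x + α := by push_cast; ring
  have hb1 : b (k+1) = (1/s)^k * ((1/s) * ((x+α)/Real.Gamma (x+α))) := by
    rw [hb]; simp only [hxk1]; ring
  have hb0 : b k = (1/s)^k * (x/Real.Gamma x) := rfl
  have hbnn : 0 ≤ b k := by
    rw [hb0]; positivity
  have hbnn1 : 0 ≤ b (k+1) := by
    rw [hb1]; positivity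
  rw [Real.norm_of_nonneg hbnn1, Real.norm_of_nonneg hbnn, hb1, hb0]
  calc (1/s)^k * ((1/s) * ((x+α)/Real.Gamma (x+α)))
      ≤ (1/s)^k * (1/2 * (x/Real.Gamma x)) :=
        mul_le_mul_of_nonneg_left step (by positivity)
    _ = 1/2 * ((1/s)^k * (x/Real.Gamma x)) := by ring

lemma summable_master (hα : 0 < α) (hβ : 0 < β) (hs : 0 < s) :
    Summable (fun k : ℕ => (1/s)^k * (|digamma (α*k+β)| / Real.Gamma (α*k+β))) := by
  apply Summable.of_norm_bounded_eventually (summable_b hα hβ hs)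
  rw [Nat.cofinite_eq_atTop]
  have ht2 : Filter.Tendsto (fun k : ℕ => α*k+β) Filter.atTop Filter.atTop :=
    Filter.tendsto_atTop_add_const_right _ β
      ((tendsto_natCast_atTop_atTop (R := ℝ)).const_mul_atTop hα)
  filter_upwards [ht2.eventually_ge_atTop 2] with k hk2
  set x := α*k+β with hxdef
  have hx1 : (1:ℝ) < x := by linarith
  have hGx : 0 < Real.Gamma x := Real.Gamma_pos_of_pos (by linarith)
  have hub : digamma x ≤ x := by
    calc digamma x ≤ Real.log x := digamma_le_log (by linarith)
      _ ≤ x := (Real.log_le_sub_one_of_pos (by linarith)).trans (by linarith)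
  have hlb : 0 ≤ digamma x := by
    have h1 : Real.log (x-1) ≤ digamma x := log_le_digamma hx1
    have : (0:ℝ) ≤ Real.log (x-1) := Real.log_nonneg (by linarith)
    linarith
  have habs : |digamma x| ≤ x := by
    rw [abs_of_nonneg hlb]; exact hub
  rw [Real.norm_eq_abs, abs_mul, abs_div, abs_of_nonneg (Real.Gamma_pos_of_pos
    (by linarith : (0:ℝ) < x)).le, abs_of_nonneg (by positivity : (0:ℝ) ≤ (1/s)^k)]
  rw [abs_abs]
  apply mul_le_mul_of_nonneg_left _ (by positivity)
  gcongr

end main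

theorem laplace_deriv_beta_Wright (α β s : ℝ) (hα : 0 < α) (hβ : 0 < β) (hs : 0 < s) :
    (∫ t in Set.Ioi (0 : ℝ), Real.exp (-(s * t)) *
        ∑' k : ℕ, (-(digamma (α * k + β) /
          (k.factorial * Real.Gamma (α * k + β)))) * t ^ k)
      = -((1 / s) * ∑' k : ℕ, s ^ (-(k : ℝ)) * digamma (α * k + β) /
          Real.Gamma (α * k + β)) := by
  set c : ℕ → ℝ := fun k => -(digamma (α*k+β) / (k.factorial * Real.Gamma (α*k+β))) with hc
  set F : ℕ → ℝ → ℝ := fun k t => c k * (Real.exp (-(s*t)) * t^k) with hF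
  have hGpos : ∀ k : ℕ, 0 < Real.Gamma (α*k+β) := fun k =>
    Real.Gamma_pos_of_pos (by positivity)
  -- integrability of each term
  have hg : ∀ k : ℕ, IntegrableOn (fun t : ℝ => Real.exp (-(s*t)) * t^k)
      (Set.Ioi 0) volume := by
    intro k
    have := integrableOn_rpow_mul_exp_neg_mul_rpow
      (by exact_mod_cast neg_one_lt_zero.trans_le (Nat.cast_nonneg k) : (-1:ℝ) < (k:ℝ))
      zero_lt_one hs
    apply this.congr_fun _ measurableSet_Ioi
    intro t ht
    show t ^ (k:ℝ) * Real.exp (-s * t ^ (1:ℝ)) = Real.exp (-(s*t)) * t^k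
    rw [Real.rpow_one, Real.rpow_natCast]
    ring_nf
  have hFint : ∀ k : ℕ, Integrable (F k) (volume.restrict (Set.Ioi 0)) := fun k =>
    ((hg k).const_mul (c k))
  -- value of each integral
  have hI : ∀ k : ℕ, (∫ t in Set.Ioi (0:ℝ), Real.exp (-(s*t)) * t^k)
      = (1/s)^(k+1) * (k.factorial : ℝ) := by
    intro k
    have h := integral_rpow_mul_exp_neg_mul_Ioi
      (by positivity : (0:ℝ) < (k:ℝ)+1) hs
    have he : ∀ t ∈ Set.Ioi (0:ℝ),
        t ^ (((k:ℝ)+1)-1) * Real.exp (-(s*t)) = Real.exp (-(s*t)) * t^k := by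
      intro t ht
      rw [show ((k:ℝ)+1)-1 = (k:ℝ) by ring, Real.rpow_natCast]
      ring
    rw [setIntegral_congr_fun measurableSet_Ioi he] at h
    rw [Real.Gamma_nat_eq_factorial,
      show ((k:ℝ)+1) = ((k+1:ℕ):ℝ) by push_cast; ring, Real.rpow_natCast] at h
    exact h
  -- norm integrals
  have hnorm : ∀ k : ℕ, (∫ t in Set.Ioi (0:ℝ), ‖F k t‖)
      = |c k| * ((1/s)^(k+1) * (k.factorial : ℝ)) := by
    intro k
    have he : ∀ t ∈ Set.Ioi (0:ℝ),
        ‖F k t‖ = |c k| * (Real.exp (-(s*t)) * t^k) := by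
      intro t ht
      simp only [hF, Real.norm_eq_abs, abs_mul]
      rw [abs_of_nonneg (Real.exp_pos _).le,
        abs_of_nonneg (pow_nonneg (le_of_lt (show (0:ℝ) < t from ht)) k)]
    rw [setIntegral_congr_fun measurableSet_Ioi he, integral_const_mul, hI k]
  -- summability of norm integrals
  have hsum : Summable (fun k : ℕ => ∫ t in Set.Ioi (0:ℝ), ‖F k t‖) := by
    have heq : ∀ k : ℕ, |c k| * ((1/s)^(k+1) * (k.factorial : ℝ))
        = (1/s) * ((1/s)^k * (|digamma (α*k+β)| / Real.Gamma (α*k+β))) := by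
      intro k
      have hf : (0:ℝ) < (k.factorial : ℝ) := by positivity
      simp only [hc]
      rw [abs_neg, abs_div, abs_of_nonneg (by positivity :
        (0:ℝ) ≤ (k.factorial : ℝ) * Real.Gamma (α*k+β))]
      field_simp
      ring_nf
      rw [mul_inv_cancel_right₀ hs.ne']
    simp only [hnorm, heq]
    exact ((summable_master hα hβ hs).mul_left _)
  -- rewrite integrand as tsum of F
  have hint : (∫ t in Set.Ioi (0:ℝ), Real.exp (-(s*t)) * ∑' k : ℕ, c k * t^k)
      = ∫ t in Set.Ioi (0:ℝ), ∑' k : ℕ, F k t := by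
    apply setIntegral_congr_fun measurableSet_Ioi
    intro t ht
    show Real.exp (-(s*t)) * ∑' k : ℕ, c k * t^k = ∑' k : ℕ, F k t
    rw [← tsum_mul_left]
    exact tsum_congr fun k => by simp only [hF]; ring
  rw [hint, ← MeasureTheory.integral_tsum_of_summable_integral_norm hFint hsum]
  -- compute the sum
  have hterm : ∀ k : ℕ, (∫ t in Set.Ioi (0:ℝ), F k t)
      = -((1/s) * ((1/s)^k * (digamma (α*k+β) / Real.Gamma (α*k+β)))) := by
    intro k
    simp only [hF, hc]
    rw [integral_const_mul, hI k]
    have hf : (0:ℝ) < (k.factorial : ℝ) := by positivity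
    have hG := hGpos k
    field_simp
    ring_nf
    rw [mul_inv_cancel_right₀ hs.ne']
  rw [tsum_congr hterm, tsum_neg, tsum_mul_left]
  congr 1
  congr 1
  apply tsum_congr
  intro k
  rw [Real.rpow_neg hs.le, Real.rpow_natCast]
  field_simp
  rw [one_div, inv_pow]; field_simp
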